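/- arXiv:0812.2685 — 2 statements merged into one kernel-verified Lean document; each statement's English description precedes it below -/
import Mathlib

section
/- Let f: ℝ → ℝ be smooth with averaged speed a(u,v) := ∫₀¹ f'(su + (1-s)v) ds. Suppose u₊ < u' < u₋ (so u'-u₋ and u'-u₊ have opposite signs) and the shock (u₋,u₊) satisfies Oleinik's entropy condition: (f(v) - f(u₋))/(v - u₋) ≥ (f(u₊) - f(u₋))/(u₊ - u₋) for all v strictly between u₋ and u₊. Then a(u₋,u') ≥ a(u₊,u'); in particular the jump in the averaged speed is not a rarefaction-shock (i.e., it is false that a(u₋,u') < a(u₋,u₊) < a(u₊,u')). -/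
lemma avg_speed_eq (f : ℝ → ℝ) (hf : ContDiff ℝ 1 f) (u v : ℝ) (huv : u ≠ v) :
    (∫ s in (0:ℝ)..1, deriv f (s * u + (1 - s) * v)) = (f u - f v) / (u - v) := by
  have hcd : Continuous (deriv f) := hf.continuous_deriv le_rfl
  have hlin : Continuous (fun s : ℝ => s * u + (1 - s) * v) := by continuity
  have hd : ∀ s : ℝ, HasDerivAt (fun s : ℝ => f (s * u + (1 - s) * v))
      ((u - v) * deriv f (s * u + (1 - s) * v)) s := by
    intro s
    have h1 : HasDerivAt (fun s : ℝ => s * u + (1 - s) * v) (u - v) s := by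
      have := ((hasDerivAt_id s).mul_const u).add
        (((hasDerivAt_const s (1:ℝ)).sub (hasDerivAt_id s)).mul_const v)
      exact this.congr_deriv (by ring)
    have h2 : HasDerivAt f (deriv f (s * u + (1 - s) * v)) (s * u + (1 - s) * v) :=
      ((hf.differentiable one_ne_zero) _).hasDerivAt
    simpa [mul_comm, Function.comp_def] using h2.comp s h1
  have hint : IntervalIntegrable (fun s : ℝ => (u - v) * deriv f (s * u + (1 - s) * v))
      MeasureTheory.volume 0 1 :=
    (Continuous.intervalIntegrable (by exact (continuous_const.mul (hcd.comp hlin))) 0 1)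
  have := intervalIntegral.integral_eq_sub_of_hasDerivAt (fun s _ => hd s) hint
  have heq : (∫ s in (0:ℝ)..1, (u - v) * deriv f (s * u + (1 - s) * v)) = f u - f v := by
    simpa using this
  rw [intervalIntegral.integral_const_mul] at heq
  have huv' : u - v ≠ 0 := sub_ne_zero.mpr huv
  field_simp
  linarith [heq]

/-- if `u₊ < u' < u₋` and the shock `(u₋,u₊)` satisfies Oleinik's
entropy condition, then `a u₋ u' ≥ a u₊ u'`; in particular the jump in the averaged
speed is not a rarefaction-shock. -/
theorem oleinik_no_rarefaction_shock
    (f : ℝ → ℝ) (hf : ContDiff ℝ 1 f)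
    (a : ℝ → ℝ → ℝ)
    (ha : ∀ u v : ℝ, a u v = ∫ s in (0:ℝ)..1, deriv f (s * u + (1 - s) * v))
    (um up u' : ℝ) (h1 : up < u') (h2 : u' < um)
    (oleinik : ∀ v : ℝ, up < v → v < um →
      (f v - f um) / (v - um) ≥ (f up - f um) / (up - um)) :
    a um u' ≥ a up u' ∧ ¬ (a um u' < a um up ∧ a um up < a up u') := by
  have hA : a um u' = (f um - f u') / (um - u') := by
    rw [ha, avg_speed_eq f hf um u' (by linarith)]
  have hB : a up u' = (f up - f u') / (up - u') := by
    rw [ha, avg_speed_eq f hf up u' (by linarith)]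
  have hc : (0:ℝ) < um - u' := by linarith
  have he : (0:ℝ) < u' - up := by linarith
  have hO := oleinik u' h1 h2
  -- rewrite oleinik with positive denominators
  have hO' : (f um - f u') / (um - u') ≥ (f um - f up) / (um - up) := by
    have e1 : (f u' - f um) / (u' - um) = (f um - f u') / (um - u') := by
      rw [← neg_div_neg_eq]; ring_nf
    have e2 : (f up - f um) / (up - um) = (f um - f up) / (um - up) := by
      rw [← neg_div_neg_eq]; ring_nf
    rw [e1, e2] at hO; exact hO
  have hd : (0:ℝ) < um - up := by linarith
  have key : (f um - f u') * (um - up) ≥ (f um - f up) * (um - u') := by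
    rw [ge_iff_le, div_le_div_iff₀ hd hc] at hO'
    linarith
  have main : a um u' ≥ a up u' := by
    rw [hA, hB]
    have : (f up - f u') / (up - u') = (f u' - f up) / (u' - up) := by
      rw [← neg_div_neg_eq]; ring_nf
    rw [this, ge_iff_le, div_le_div_iff₀ he hc]
    nlinarith [key]
  exact ⟨main, fun ⟨hx, hy⟩ => absurd (lt_trans hx hy) (not_lt.mpr main)⟩
end

section
/- Let p be strictly decreasing on an interval with c(v,v') := sqrt(-(p(v)-p(v'))/(v-v')). Suppose v' lies strictly between v₋ and v₊ and the 2-shock (v₋,v₊) satisfies Wendroff's entropy criterion: c(v,v₋) ≥ c(v₋,v₊) for all v strictly between v₋ and v₊. Then it is not the case that c(v₋,v') < c(v₋,v₊) < c(v₊,v'); i.e., the entropy-admissible 2-shock cannot be a rarefaction-shock of the averaged matrix. -/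
/-- a 2-shock of the p-system satisfying Wendroff's entropy criterion
cannot be a rarefaction-shock of the averaged matrix. -/
theorem wendroff_no_rarefaction_shock
    (p : ℝ → ℝ)
    (I : Set ℝ) (hI : I.OrdConnected) (hp : StrictAntiOn p I)
    (c : ℝ → ℝ → ℝ)
    (hc : ∀ v w : ℝ, v ≠ w → c v w = Real.sqrt (-((p v - p w) / (v - w))))
    (vm vp v' : ℝ) (hvm : vm ∈ I) (hvp : vp ∈ I) (hv' : v' ∈ I)
    (hbetween : (vm < v' ∧ v' < vp) ∨ (vp < v' ∧ v' < vm))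
    (wendroff : ∀ v : ℝ, ((vm < v ∧ v < vp) ∨ (vp < v ∧ v < vm)) →
      c v vm ≥ c vm vp) :
    ¬ (c vm v' < c vm vp ∧ c vm vp < c vp v') := by
  rintro ⟨h1, _⟩
  have hne : v' ≠ vm := by rcases hbetween with ⟨a, b⟩ | ⟨a, b⟩ <;> intro h <;> simp_all <;> linarith
  have hsym : c v' vm = c vm v' := by
    rw [hc v' vm hne, hc vm v' hne.symm, ← neg_sub (p vm) (p v'), ← neg_sub vm v',
      neg_div_neg_eq]
  have := wendroff v' hbetween
  rw [hsym] at this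
  linarith
end
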